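/- Let P = Θ B Θᵀ where Θ ∈ {0,1}^{n×K} is a clustering matrix with minimal class size n_min > 0 and B ∈ ℝ^{K×K} is symmetric with smallest eigenvalue λ_min(B) ≥ c > 0. Then the smallest nonzero eigenvalue of P satisfies λ_K(P) ≥ c · n_min. -/

import Mathlib

open Matrix

noncomputable def specNorm {m n : ℕ} (M : Matrix (Fin m) (Fin n) ℝ) : ℝ :=
  ‖LinearMap.toContinuousLinearMap (Matrix.toEuclideanLin M)‖

def IsClusterMatrix {n K : ℕ} (Θ : Matrix (Fin n) (Fin K) ℝ) : Prop :=
  (∀ i k, Θ i k = 0 ∨ Θ i k = 1) ∧ ∀ i, ∑ k, Θ i k = 1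

noncomputable def eigDesc {n : ℕ} (M : Matrix (Fin n) (Fin n) ℝ)
    (hM : M.IsHermitian) : ℕ → ℝ :=
  fun j => if h : j < n then hM.eigenvalues (Tuple.sort hM.eigenvalues (Fin.rev ⟨j, h⟩)) else 0

open RealInnerProductSpace

lemma dot_eq_inner {n : ℕ} (x y : EuclideanSpace ℝ (Fin n)) :
    ⟪x, y⟫ = (x : Fin n → ℝ) ⬝ᵥ (y : Fin n → ℝ) := by
  simp [PiLp.inner_apply, dotProduct]
  exact Finset.sum_congr rfl fun _ _ => mul_comm _ _

lemma herm_transpose {m : ℕ} {M : Matrix (Fin m) (Fin m) ℝ} (hM : M.IsHermitian) : Mᵀ = M := by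
  rw [← Matrix.conjTranspose_eq_transpose_of_trivial]; exact hM.eq

lemma dot_mulVec_symm {m : ℕ} {M : Matrix (Fin m) (Fin m) ℝ} (hM : M.IsHermitian)
    (x y : Fin m → ℝ) : x ⬝ᵥ (M *ᵥ y) = (M *ᵥ x) ⬝ᵥ y := by
  rw [Matrix.dotProduct_mulVec, ← Matrix.mulVec_transpose, herm_transpose hM]

lemma quad_eq_sum {m : ℕ} (M : Matrix (Fin m) (Fin m) ℝ) (hM : M.IsHermitian)
    (v : EuclideanSpace ℝ (Fin m)) :
    (v : Fin m → ℝ) ⬝ᵥ (M *ᵥ v) = ∑ i, hM.eigenvalues i * ((hM.eigenvectorBasis i : Fin m → ℝ) ⬝ᵥ v) ^ 2 := by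
  set u := hM.eigenvectorBasis with hu
  have hrepr : ∀ (w : EuclideanSpace ℝ (Fin m)) i, u.repr w i = (u i : Fin m → ℝ) ⬝ᵥ w := by
    intro w i
    rw [u.repr_apply_apply, dot_eq_inner]
  have h1 : (v : Fin m → ℝ) ⬝ᵥ (M *ᵥ v)
      = ⟪v, WithLp.toLp 2 (M *ᵥ v)⟫ := (dot_eq_inner v (WithLp.toLp 2 (M *ᵥ v))).symm
  rw [h1, ← u.repr.inner_map_map]
  rw [EuclideanSpace.inner_eq_star_dotProduct]
  simp only [dotProduct, Pi.star_apply, star_trivial]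
  refine Finset.sum_congr rfl fun i _ => ?_
  have h3 : M *ᵥ (u i : Fin m → ℝ) = hM.eigenvalues i • (u i : Fin m → ℝ) :=
    hM.mulVec_eigenvectorBasis i
  have h2 : u.repr (WithLp.toLp 2 (M *ᵥ v)) i
      = hM.eigenvalues i * ((u i : Fin m → ℝ) ⬝ᵥ v) := by
    rw [hrepr, dot_mulVec_symm hM, h3, smul_dotProduct, smul_eq_mul]
  rw [h2, hrepr]
  simp only [dotProduct]
  ring

lemma parseval_dot {m : ℕ} (M : Matrix (Fin m) (Fin m) ℝ) (hM : M.IsHermitian)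
    (v : EuclideanSpace ℝ (Fin m)) :
    (v : Fin m → ℝ) ⬝ᵥ v = ∑ i, ((hM.eigenvectorBasis i : Fin m → ℝ) ⬝ᵥ v) ^ 2 := by
  set u := hM.eigenvectorBasis
  have h1 : (v : Fin m → ℝ) ⬝ᵥ v = ⟪v, v⟫ := (dot_eq_inner _ _).symm
  rw [h1, ← u.repr.inner_map_map, EuclideanSpace.inner_eq_star_dotProduct]
  simp only [dotProduct, Pi.star_apply, star_trivial]
  refine Finset.sum_congr rfl fun i _ => ?_
  rw [u.repr_apply_apply, dot_eq_inner]
  simp only [dotProduct]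
  ring

lemma quad_lower {m : ℕ} (M : Matrix (Fin m) (Fin m) ℝ) (hM : M.IsHermitian)
    (c : ℝ) (hc : ∀ k, c ≤ hM.eigenvalues k) (v : Fin m → ℝ) :
    c * (v ⬝ᵥ v) ≤ v ⬝ᵥ (M *ᵥ v) := by
  rw [show v ⬝ᵥ (M *ᵥ v) = _ from quad_eq_sum M hM (WithLp.toLp 2 v),
    show v ⬝ᵥ v = _ from parseval_dot M hM (WithLp.toLp 2 v), Finset.mul_sum]
  exact Finset.sum_le_sum fun i _ => mul_le_mul_of_nonneg_right (hc i) (sq_nonneg _)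


set_option maxHeartbeats 1000000 in
theorem smallest_nonzero_eig_lower_bound {n K : ℕ} (hK : 0 < K) (hKn : K ≤ n)
    (Θ : Matrix (Fin n) (Fin K) ℝ) (hΘ : IsClusterMatrix Θ)
    (B : Matrix (Fin K) (Fin K) ℝ) (hB : B.IsHermitian)
    (c : ℝ) (hc : 0 < c) (hBc : ∀ k, c ≤ hB.eigenvalues k)
    (nmin : ℕ)
    (hnmin : nmin = Finset.univ.inf' ⟨⟨0, hK⟩, Finset.mem_univ _⟩
      (fun k => (Finset.univ.filter fun i => Θ i k = 1).card))
    (hnminpos : 0 < nmin)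
    (P : Matrix (Fin n) (Fin n) ℝ) (hPdef : P = Θ * B * Θᵀ)
    (hP : P.IsHermitian) :
    c * nmin ≤ eigDesc P hP (K - 1) := by
  classical
  by_contra hcon
  push_neg at hcon
  obtain ⟨h01, hsum⟩ := hΘ
  have hpos : ∀ i k, (0:ℝ) ≤ Θ i k := by
    intro i k; rcases h01 i k with h | h <;> rw [h] <;> norm_num
  set N : Fin K → ℕ := fun k => (Finset.univ.filter fun i => Θ i k = 1).card with hN
  have hNge : ∀ k, nmin ≤ N k := by
    intro k; rw [hnmin]; exact Finset.inf'_le _ (Finset.mem_univ k)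
  -- each row has exactly one 1
  have hrow0 : ∀ i k, Θ i k = 1 → ∀ l, l ≠ k → Θ i l = 0 := by
    intro i k hik l hlk
    by_contra h0
    have h1 : Θ i l = 1 := (h01 i l).resolve_left h0
    have h2 : ∑ k', Θ i k' ≥ 2 := by
      have hsub : ({l, k} : Finset (Fin K)) ⊆ Finset.univ := Finset.subset_univ _
      have := Finset.sum_le_sum_of_subset_of_nonneg hsub (fun x _ _ => hpos i x)
      rw [Finset.sum_pair hlk, h1, hik] at this
      linarith
    rw [hsum i] at h2; linarith
  have hrowval : ∀ (y : Fin K → ℝ) i k, Θ i k = 1 → (Θ *ᵥ y) i = y k := by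
    intro y i k hik
    simp only [Matrix.mulVec, dotProduct]
    rw [Finset.sum_eq_single k]
    · rw [hik, one_mul]
    · intro l _ hlk; rw [hrow0 i k hik l hlk, zero_mul]
    · intro h; exact absurd (Finset.mem_univ k) h
  have hfilne : ∀ k, ∃ i, Θ i k = 1 := by
    intro k
    have : 0 < N k := lt_of_lt_of_le hnminpos (hNge k)
    obtain ⟨i, hi⟩ := Finset.card_pos.mp this
    exact ⟨i, (Finset.mem_filter.mp hi).2⟩
  -- z = Θᵀ (Θ y) = diag(N) y
  have hz : ∀ (y : Fin K → ℝ) k, (Θᵀ *ᵥ (Θ *ᵥ y)) k = (N k : ℝ) * y k := by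
    intro y k
    simp only [Matrix.mulVec, dotProduct, Matrix.transpose_apply]
    have hterm : ∀ i, Θ i k * ∑ l, Θ i l * y l = if Θ i k = 1 then y k else 0 := by
      intro i
      rcases h01 i k with h | h
      · rw [h, zero_mul, if_neg (by norm_num)]
      · rw [h, one_mul, if_pos rfl]
        have := hrowval y i k h
        simpa [Matrix.mulVec, dotProduct] using this
    rw [Finset.sum_congr rfl fun i _ => hterm i, ← Finset.sum_filter,
      Finset.sum_const]
    simp only [nsmul_eq_mul]
    rfl
  -- injectivity of Θ
  have hTapp : ∀ y : EuclideanSpace ℝ (Fin K),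
      (Matrix.toEuclideanLin Θ y : Fin n → ℝ) = Θ *ᵥ (y : Fin K → ℝ) := fun _ => rfl
  have hinj : Function.Injective (Matrix.toEuclideanLin Θ) := by
    rw [injective_iff_map_eq_zero]
    intro y hy
    ext k
    obtain ⟨i, hik⟩ := hfilne k
    have h0 : (Θ *ᵥ (y : Fin K → ℝ)) i = 0 := by
      rw [← hTapp y, hy]; rfl
    rw [hrowval y i k hik] at h0
    exact h0
  -- sorted eigenvalue facts
  set ev := hP.eigenvalues with hev
  set σ := Tuple.sort ev with hσ
  have hK1 : K - 1 < n := lt_of_lt_of_le (Nat.sub_lt hK one_pos) hKn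
  have hlt : ev (σ (Fin.rev ⟨K - 1, hK1⟩)) < c * nmin := by
    simpa only [eigDesc, dif_pos hK1] using hcon
  have hrevval : ((Fin.rev ⟨K - 1, hK1⟩ : Fin n) : ℕ) = n - K := by
    simp only [Fin.rev, Fin.val_mk]; omega
  have hltS : ∀ j : Fin n, (j : ℕ) ≤ n - K → ev (σ j) < c * nmin := by
    intro j hj
    have hle : j ≤ Fin.rev ⟨K - 1, hK1⟩ := by rw [Fin.le_def, hrevval]; exact hj
    exact lt_of_le_of_lt (Tuple.monotone_sort ev hle) hlt
  set b : Fin n := ⟨n - K, by omega⟩ with hb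
  set S : Finset (Fin n) := Finset.univ.filter (fun i => σ.symm i ≤ b) with hS
  have hSeq : S = Finset.map σ.toEmbedding (Finset.Iic b) := by
    ext i
    simp only [hS, Finset.mem_filter, Finset.mem_univ, true_and, Finset.mem_map,
      Finset.mem_Iic, Equiv.coe_toEmbedding]
    constructor
    · intro h; exact ⟨σ.symm i, h, σ.apply_symm_apply i⟩
    · rintro ⟨j, hj, rfl⟩; rwa [σ.symm_apply_apply]
  have hScard : S.card = n - K + 1 := by
    rw [hSeq, Finset.card_map, Fin.card_Iic]
  have hevS : ∀ i ∈ S, ev i < c * nmin := by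
    intro i hi
    have h1 : σ.symm i ≤ b := (Finset.mem_filter.mp hi).2
    have := hltS (σ.symm i) h1
    rwa [σ.apply_symm_apply] at this
  -- subspaces
  set u := hP.eigenvectorBasis with hu
  set V : Submodule ℝ (EuclideanSpace ℝ (Fin n)) := LinearMap.range (Matrix.toEuclideanLin Θ) with hV
  set UU : Submodule ℝ (EuclideanSpace ℝ (Fin n)) := Submodule.span ℝ (↑(Sᶜ.image u)) with hUU
  have hVrank : Module.finrank ℝ V = K := by
    rw [hV, LinearMap.finrank_range_of_inj hinj, finrank_euclideanSpace_fin]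
  have hUUle : Module.finrank ℝ UU ≤ K - 1 := by
    calc Module.finrank ℝ UU ≤ (Sᶜ.image u).card := finrank_span_finset_le_card _
      _ ≤ Sᶜ.card := Finset.card_image_le
      _ = K - 1 := by
          rw [Finset.card_compl, hScard, Fintype.card_fin]; omega
  have htot : Module.finrank ℝ UU + Module.finrank ℝ UUᗮ = n := by
    rw [Submodule.finrank_add_finrank_orthogonal, finrank_euclideanSpace_fin]
  have hWrank : n - K + 1 ≤ Module.finrank ℝ UUᗮ := by omega
  have hfinVW : 0 < Module.finrank ℝ ↥(V ⊓ UUᗮ) := by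
    have h1 := Submodule.finrank_sup_add_finrank_inf_eq V UUᗮ
    have h2 : Module.finrank ℝ ↥(V ⊔ UUᗮ) ≤ n := by
      have := Submodule.finrank_le (V ⊔ UUᗮ)
      rwa [finrank_euclideanSpace_fin] at this
    omega
  have hne : V ⊓ UUᗮ ≠ ⊥ := by
    intro h
    rw [h, finrank_bot] at hfinVW
    exact lt_irrefl 0 hfinVW
  obtain ⟨v, hvVW, hv0⟩ := Submodule.exists_mem_ne_zero_of_ne_bot hne
  have hvV : v ∈ V := hvVW.1
  have hvW : v ∈ UUᗮ := hvVW.2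
  obtain ⟨y, hy⟩ := hvV
  -- coefficients
  set a : Fin n → ℝ := fun i => (u i : Fin n → ℝ) ⬝ᵥ (v : Fin n → ℝ) with ha
  have haS : ∀ i ∉ S, a i = 0 := by
    intro i hi
    have hmem : u i ∈ UU := Submodule.subset_span
      (by exact_mod_cast Finset.mem_image_of_mem u (Finset.mem_compl.mpr hi))
    have h2 := (Submodule.mem_orthogonal UU v).mp hvW (u i) hmem
    show (u i : Fin n → ℝ) ⬝ᵥ (v : Fin n → ℝ) = 0
    rw [← dot_eq_inner]
    exact h2
  -- quadratic form identities
  have hvfun : (v : Fin n → ℝ) = Θ *ᵥ (y : Fin K → ℝ) := by rw [← hy]; rfl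
  set z : Fin K → ℝ := Θᵀ *ᵥ (v : Fin n → ℝ) with hzdef
  have hzk : ∀ k, z k = (N k : ℝ) * y k := by
    intro k; rw [hzdef, hvfun]; exact hz y k
  have hdotswap : ∀ (x : Fin n → ℝ) (w : Fin K → ℝ),
      x ⬝ᵥ (Θ *ᵥ w) = (Θᵀ *ᵥ x) ⬝ᵥ w := by
    intro x w
    rw [Matrix.dotProduct_mulVec, ← Matrix.mulVec_transpose]
  have hquad : (v : Fin n → ℝ) ⬝ᵥ (P *ᵥ (v : Fin n → ℝ)) = z ⬝ᵥ (B *ᵥ z) := by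
    rw [hPdef, Matrix.mul_assoc, ← Matrix.mulVec_mulVec, ← Matrix.mulVec_mulVec, hdotswap]
  have hvv : (v : Fin n → ℝ) ⬝ᵥ (v : Fin n → ℝ) = ∑ k, (N k : ℝ) * y k ^ 2 := by
    nth_rewrite 2 [hvfun]
    rw [hdotswap, ← hzdef, dotProduct]
    exact Finset.sum_congr rfl fun k _ => by rw [hzk k]; ring
  have hzz : z ⬝ᵥ z = ∑ k, ((N k : ℝ)) ^ 2 * y k ^ 2 := by
    rw [dotProduct]
    exact Finset.sum_congr rfl fun k _ => by rw [hzk k]; ring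
  -- lower bound
  have hlow : (c * nmin) * ((v : Fin n → ℝ) ⬝ᵥ (v : Fin n → ℝ))
      ≤ (v : Fin n → ℝ) ⬝ᵥ (P *ᵥ (v : Fin n → ℝ)) := by
    have h1 : (nmin : ℝ) * ((v : Fin n → ℝ) ⬝ᵥ (v : Fin n → ℝ)) ≤ z ⬝ᵥ z := by
      rw [hvv, hzz, Finset.mul_sum]
      refine Finset.sum_le_sum fun k _ => ?_
      have hk : (nmin : ℝ) ≤ (N k : ℝ) := by exact_mod_cast hNge k
      have h2 : (0:ℝ) ≤ (N k : ℝ) * y k ^ 2 := by positivity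
      calc (nmin : ℝ) * ((N k : ℝ) * y k ^ 2) ≤ (N k : ℝ) * ((N k : ℝ) * y k ^ 2) :=
            mul_le_mul_of_nonneg_right hk h2
        _ = (N k : ℝ) ^ 2 * y k ^ 2 := by ring
    have h3 : c * (z ⬝ᵥ z) ≤ z ⬝ᵥ (B *ᵥ z) := quad_lower B hB c hBc z
    calc (c * nmin) * ((v : Fin n → ℝ) ⬝ᵥ (v : Fin n → ℝ))
        = c * ((nmin : ℝ) * ((v : Fin n → ℝ) ⬝ᵥ (v : Fin n → ℝ))) := by ring
      _ ≤ c * (z ⬝ᵥ z) := mul_le_mul_of_nonneg_left h1 (le_of_lt hc)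
      _ ≤ z ⬝ᵥ (B *ᵥ z) := h3
      _ = (v : Fin n → ℝ) ⬝ᵥ (P *ᵥ (v : Fin n → ℝ)) := hquad.symm
  -- upper bound
  have hup : (v : Fin n → ℝ) ⬝ᵥ (P *ᵥ (v : Fin n → ℝ)) = ∑ i, ev i * a i ^ 2 :=
    quad_eq_sum P hP v
  have hpars : (v : Fin n → ℝ) ⬝ᵥ (v : Fin n → ℝ) = ∑ i, a i ^ 2 :=
    parseval_dot P hP v
  have hvvpos : 0 < (v : Fin n → ℝ) ⬝ᵥ (v : Fin n → ℝ) := by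
    have hnn : 0 ≤ (v : Fin n → ℝ) ⬝ᵥ (v : Fin n → ℝ) :=
      Finset.sum_nonneg fun i _ => mul_self_nonneg _
    rcases hnn.lt_or_eq with h | h
    · exact h
    · exfalso; exact hv0 (WithLp.ofLp_injective 2 (dotProduct_self_eq_zero.mp h.symm))
  obtain ⟨i0, hi0⟩ : ∃ i, a i ≠ 0 := by
    by_contra hall
    push_neg at hall
    rw [hpars] at hvvpos
    have : ∑ i, a i ^ 2 = 0 := Finset.sum_eq_zero fun i _ => by rw [hall i]; ring
    linarith
  have hi0S : i0 ∈ S := by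
    by_contra h
    exact hi0 (haS i0 h)
  have hstrict : ∑ i, ev i * a i ^ 2 < ∑ i : Fin n, (c * nmin) * a i ^ 2 := by
    refine Finset.sum_lt_sum (fun i _ => ?_) ⟨i0, Finset.mem_univ i0, ?_⟩
    · by_cases hiS : i ∈ S
      · exact mul_le_mul_of_nonneg_right (le_of_lt (hevS i hiS)) (sq_nonneg _)
      · rw [haS i hiS]; ring_nf; exact le_refl _
    · exact mul_lt_mul_of_pos_right (hevS i0 hi0S) (sq_pos_of_ne_zero hi0)
  have hfin : (c * nmin) * ((v : Fin n → ℝ) ⬝ᵥ (v : Fin n → ℝ))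
      < (c * nmin) * ((v : Fin n → ℝ) ⬝ᵥ (v : Fin n → ℝ)) := by
    calc (c * nmin) * ((v : Fin n → ℝ) ⬝ᵥ (v : Fin n → ℝ))
        ≤ ∑ i, ev i * a i ^ 2 := by rw [← hup]; exact hlow
      _ < ∑ i : Fin n, (c * nmin) * a i ^ 2 := hstrict
      _ = (c * nmin) * ((v : Fin n → ℝ) ⬝ᵥ (v : Fin n → ℝ)) := by
          rw [hpars, Finset.mul_sum]
  exact lt_irrefl _ hfin
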